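/- Let g be a trinomial such that some exponent l_{ij} equals 1. Then the trinomial algebra R(g) admits a nonzero locally nilpotent derivation that is homogeneous with respect to the finest grading by Z^n/Im(L*). -/

import Mathlib

open MvPolynomial
set_option synthInstance.maxHeartbeats 1000000
set_option maxHeartbeats 1000000

/-- Index set of the variables `T_{ij}`, `i = 0,1,2`, `j = 1,…,n_i`. -/
abbrev TrinIdx (n : Fin 3 → ℕ) : Type := Σ i : Fin 3, Fin (n i)

/-- The trinomial `g = T₀^{l₀} + T₁^{l₁} + T₂^{l₂}` where
`T_i^{l_i} = ∏_j T_{ij}^{l_{ij}}`. -/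
noncomputable def trinomial (K : Type*) [Field K] (n : Fin 3 → ℕ)
    (l : ∀ i : Fin 3, Fin (n i) → ℕ) : MvPolynomial (TrinIdx n) K :=
  ∑ i : Fin 3, ∏ j : Fin (n i), X (⟨i, j⟩ : TrinIdx n) ^ l i j

/-- The trinomial algebra `R(g) = K[T_{ij}]/(g)`. -/
abbrev TrinAlg (K : Type*) [Field K] (n : Fin 3 → ℕ) (l : ∀ i : Fin 3, Fin (n i) → ℕ) :
    Type _ :=
  MvPolynomial (TrinIdx n) K ⧸ Ideal.span {trinomial K n l}

/-- The `k`-th row (`k = 1, 2`) of the matrix `L` with rows `(-l₀, l₁, 0)` and `(-l₀, 0, l₂)`,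
viewed as an element of `ℤⁿ`. -/
def trinRow (n : Fin 3 → ℕ) (l : ∀ i : Fin 3, Fin (n i) → ℕ) (k : Fin 3) :
    TrinIdx n → ℤ :=
  fun x => if x.1 = 0 then -(l x.1 x.2 : ℤ) else if x.1 = k then (l x.1 x.2 : ℤ) else 0

/-- The grading group `K_gr = ℤⁿ / Im(L*)`. -/
abbrev TrinGradeGroup (n : Fin 3 → ℕ) (l : ∀ i : Fin 3, Fin (n i) → ℕ) : Type _ :=
  (TrinIdx n → ℤ) ⧸ Submodule.span ℤ {trinRow n l 1, trinRow n l 2}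

/-- The projection `Q : ℤⁿ → ℤⁿ / Im(L*)`. -/
def trinQ (n : Fin 3 → ℕ) (l : ∀ i : Fin 3, Fin (n i) → ℕ) (v : TrinIdx n → ℤ) :
    TrinGradeGroup n l :=
  Submodule.Quotient.mk v

/-- The degree `deg T_{ij} = Q(e_{ij})` of the generator `T_{ij}`. -/
noncomputable def trinDeg (n : Fin 3 → ℕ) (l : ∀ i : Fin 3, Fin (n i) → ℕ) (x : TrinIdx n) :
    TrinGradeGroup n l :=
  trinQ n l (Pi.single x 1)

/-- The degree of a monomial with exponent vector `m`, with respect to a weight function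
`w` on the variables taking values in an abelian group `A`. -/
def monWeight {A : Type*} [AddCommGroup A] {n : Fin 3 → ℕ} (w : TrinIdx n → A)
    (m : TrinIdx n →₀ ℕ) : A :=
  ∑ x ∈ m.support, m x • w x

/-- `f ∈ R(g)` is homogeneous of degree `d` with respect to the weights `w` if it is the image
of a polynomial all of whose monomials have `w`-degree `d`. -/
def IsHomog (K : Type*) [Field K] {n : Fin 3 → ℕ} (l : ∀ i : Fin 3, Fin (n i) → ℕ)
    {A : Type*} [AddCommGroup A] (w : TrinIdx n → A) (f : TrinAlg K n l) (d : A) : Prop :=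
  ∃ p : MvPolynomial (TrinIdx n) K,
    Ideal.Quotient.mk (Ideal.span {trinomial K n l}) p = f ∧
      ∀ m ∈ p.support, monWeight w m = d

/-- A derivation of `R(g)` is homogeneous w.r.t. the weights `w` if it shifts `w`-degrees by a
fixed element. -/
def IsHomogDer (K : Type*) [Field K] {n : Fin 3 → ℕ} (l : ∀ i : Fin 3, Fin (n i) → ℕ)
    {A : Type*} [AddCommGroup A] (w : TrinIdx n → A)
    (δ : Derivation K (TrinAlg K n l) (TrinAlg K n l)) : Prop :=
  ∃ d : A, ∀ (e : A) (f : TrinAlg K n l), IsHomog K l w f e → IsHomog K l w (δ f) (e + d)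

/-- A derivation is locally nilpotent if every element is annihilated by some power of it. -/
def IsLND (K : Type*) [Field K] {n : Fin 3 → ℕ} (l : ∀ i : Fin 3, Fin (n i) → ℕ)
    (δ : Derivation K (TrinAlg K n l) (TrinAlg K n l)) : Prop :=
  ∀ f : TrinAlg K n l, ∃ m : ℕ, (δ.toLinearMap ^ m) f = 0

/-! ### Auxiliary: derivations descend to quotients by stable ideals -/

section QuotDer
variable {R A : Type*} [CommRing R] [CommRing A] [Algebra R A]

noncomputable def quotDerLin (I : Ideal A) (D : Derivation R A A) (hD : ∀ x ∈ I, D x ∈ I) :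
    (A ⧸ I) →ₗ[R] (A ⧸ I) where
  toFun x := Quotient.liftOn' x (fun a => Ideal.Quotient.mk I (D a)) (by
    intro a b h
    have hab : a - b ∈ I := (Submodule.quotientRel_def I).mp h
    have : D a - D b ∈ I := by simpa [map_sub] using hD _ hab
    exact Ideal.Quotient.eq.mpr this)
  map_add' := by
    rintro ⟨a⟩ ⟨b⟩
    show Ideal.Quotient.mk I (D (a + b)) = Ideal.Quotient.mk I (D a) + Ideal.Quotient.mk I (D b)
    rw [map_add, map_add]
  map_smul' := by
    rintro r ⟨a⟩
    show Ideal.Quotient.mk I (D (r • a)) = r • Ideal.Quotient.mk I (D a)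
    rw [D.map_smul, Algebra.smul_def, map_mul, Ideal.Quotient.mk_algebraMap, ← Algebra.smul_def]

noncomputable def quotDer (I : Ideal A) (D : Derivation R A A) (hD : ∀ x ∈ I, D x ∈ I) :
    Derivation R (A ⧸ I) (A ⧸ I) :=
  Derivation.mk' (quotDerLin I D hD) (by
    rintro ⟨a⟩ ⟨b⟩
    show Ideal.Quotient.mk I (D (a * b)) = _
    rw [D.leibniz]
    show _ = (Ideal.Quotient.mk I a) • Ideal.Quotient.mk I (D b)
        + (Ideal.Quotient.mk I b) • Ideal.Quotient.mk I (D a)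
    rw [map_add, smul_eq_mul, smul_eq_mul, smul_eq_mul, smul_eq_mul, map_mul, map_mul])

@[simp] theorem quotDer_mk (I : Ideal A) (D : Derivation R A A) (hD : ∀ x ∈ I, D x ∈ I) (a : A) :
    quotDer I D hD (Ideal.Quotient.mk I a) = Ideal.Quotient.mk I (D a) := rfl

theorem deriv_map_sum {R A M : Type*} [CommSemiring R] [CommSemiring A] [Algebra R A]
    [AddCommMonoid M] [Module R M] [Module A M] (D : Derivation R A M) {ι : Type*}
    (s : Finset ι) (f : ι → A) : D (∑ i ∈ s, f i) = ∑ i ∈ s, D (f i) := by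
  simpa using map_sum (D : A →ₗ[R] M) f s

theorem iter_deriv_zero (D : Derivation R A A) (k : ℕ) : (⇑D)^[k] (0 : A) = 0 := by
  induction k with
  | zero => rfl
  | succ k ih => rw [Function.iterate_succ_apply, D.map_zero, ih]

theorem iter_deriv_add (D : Derivation R A A) (k : ℕ) (x y : A) :
    (⇑D)^[k] (x + y) = (⇑D)^[k] x + (⇑D)^[k] y := by
  induction k generalizing x y with
  | zero => rfl
  | succ k ih => rw [Function.iterate_succ_apply, Function.iterate_succ_apply,
      Function.iterate_succ_apply, D.map_add, ih]

theorem iter_deriv_le (D : Derivation R A A) {m m' : ℕ} (h : m ≤ m') {x : A}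
    (hx : (⇑D)^[m] x = 0) : (⇑D)^[m'] x = 0 := by
  obtain ⟨k, rfl⟩ := Nat.exists_eq_add_of_le h
  rw [add_comm, Function.iterate_add_apply, hx, iter_deriv_zero]

theorem iter_deriv_mul (D : Derivation R A A) :
    ∀ (k mp mq : ℕ) (p q : A), (⇑D)^[mp] p = 0 → (⇑D)^[mq] q = 0 → mp + mq ≤ k + 1 →
      (⇑D)^[k] (p * q) = 0 := by
  intro k
  induction k with
  | zero =>
    intro mp mq p q hp hq hle
    rcases Nat.eq_zero_or_pos mp with h | h
    · subst h; simp only [Function.iterate_zero_apply] at hp; simp [hp]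
    · have : mq = 0 := by omega
      subst this; simp only [Function.iterate_zero_apply] at hq; simp [hq]
  | succ k ih =>
    intro mp mq p q hp hq hle
    rcases Nat.eq_zero_or_pos mp with h | h
    · subst h; simp only [Function.iterate_zero_apply] at hp
      rw [hp, zero_mul, iter_deriv_zero]
    rcases Nat.eq_zero_or_pos mq with h' | h'
    · subst h'; simp only [Function.iterate_zero_apply] at hq
      rw [hq, mul_zero, iter_deriv_zero]
    obtain ⟨mp', rfl⟩ := Nat.exists_eq_succ_of_ne_zero (Nat.pos_iff_ne_zero.mp h)
    obtain ⟨mq', rfl⟩ := Nat.exists_eq_succ_of_ne_zero (Nat.pos_iff_ne_zero.mp h')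
    rw [Function.iterate_succ_apply, D.leibniz, smul_eq_mul, smul_eq_mul, iter_deriv_add]
    have h1 : (⇑D)^[k] (p * D q) = 0 := by
      refine ih (mp' + 1) mq' p (D q) hp ?_ (by omega)
      rw [← Function.iterate_succ_apply]; exact hq
    have h2 : (⇑D)^[k] (q * D p) = 0 := by
      refine ih (mq' + 1) mp' q (D p) hq ?_ (by omega)
      rw [← Function.iterate_succ_apply]; exact hp
    rw [h1, h2, add_zero]

end QuotDer

/-! ### Auxiliary MvPolynomial lemmas -/

section MvAux
variable {σ R : Type*} [CommSemiring R]

theorem prod_X_pow_eq_monomial' {ι : Type*} (s : Finset ι) (f : ι → σ) (e : ι → ℕ) :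
    (∏ j ∈ s, (X (f j) : MvPolynomial σ R) ^ e j)
      = monomial (∑ j ∈ s, Finsupp.single (f j) (e j)) 1 := by
  classical
  induction s using Finset.induction with
  | empty => simp
  | insert _ _ h ih =>
    rw [Finset.prod_insert h, Finset.sum_insert h, ih, X_pow_eq_monomial, monomial_mul, mul_one]

theorem mem_support_monomial' {e m : σ →₀ ℕ} {c : R} (h : m ∈ (monomial e c).support) :
    c ≠ 0 ∧ m = e := by
  classical
  rw [support_monomial] at h
  split_ifs at h with hc
  · simp at h
  · exact ⟨hc, Finset.mem_singleton.mp h⟩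

theorem degreeOf_monomial_le (v : σ) (e : σ →₀ ℕ) (c : R) :
    degreeOf v (monomial e c) ≤ e v := by
  rw [degreeOf_le_iff]
  intro m hm
  rw [(mem_support_monomial' hm).2]

theorem support_pderiv' (v : σ) (p : MvPolynomial σ R) :
    ∀ m' ∈ (pderiv v p).support, ∃ m ∈ p.support, m v ≠ 0 ∧ m' = m - Finsupp.single v 1 := by
  classical
  intro m' hm'
  have hrep : pderiv v p
      = ∑ m ∈ p.support, monomial (m - Finsupp.single v 1) (coeff m p * (m v : R)) := by
    conv_lhs => rw [p.as_sum]
    rw [deriv_map_sum]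
    exact Finset.sum_congr rfl fun m _ => pderiv_monomial
  rw [hrep] at hm'
  obtain ⟨m, hm, hmem⟩ := Finset.mem_biUnion.mp (support_sum hm')
  obtain ⟨hc, rfl⟩ := mem_support_monomial' hmem
  refine ⟨m, hm, fun h0 => hc ?_, rfl⟩
  rw [h0, Nat.cast_zero, mul_zero]

end MvAux

section MvAuxRing
variable {σ R : Type*} [CommRing R]

theorem degreeOf_neg' (v : σ) (p : MvPolynomial σ R) : degreeOf v (-p) = degreeOf v p := by
  rw [degreeOf_eq_sup, degreeOf_eq_sup, support_neg]

theorem pderiv_eq_zero_of_degreeOf_eq_zero (v : σ) (p : MvPolynomial σ R)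
    (h : degreeOf v p = 0) : pderiv v p = 0 := by
  by_contra hne
  obtain ⟨m', hm'⟩ := Finset.nonempty_iff_ne_empty.mpr
    (fun he => hne (support_eq_empty.mp he))
  obtain ⟨m, hm, hv, _⟩ := support_pderiv' v p m' hm'
  have := monomial_le_degreeOf v hm
  omega

theorem degreeOf_pderiv_self_le (v : σ) (p : MvPolynomial σ R) {N : ℕ}
    (h : degreeOf v p ≤ N + 1) : degreeOf v (pderiv v p) ≤ N := by
  rw [degreeOf_le_iff]
  intro m' hm'
  obtain ⟨m, hm, hv, rfl⟩ := support_pderiv' v p m' hm'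
  have := monomial_le_degreeOf v hm
  rw [Finsupp.tsub_apply, Finsupp.single_eq_same]
  omega

theorem degreeOf_pderiv_other_le (t v : σ) (p : MvPolynomial σ R) :
    degreeOf t (pderiv v p) ≤ degreeOf t p := by
  rw [degreeOf_le_iff]
  intro m' hm'
  obtain ⟨m, hm, hv, rfl⟩ := support_pderiv' v p m' hm'
  have := monomial_le_degreeOf t hm
  rw [Finsupp.tsub_apply]
  omega

end MvAuxRing
/-! ### Trinomial specifics -/

section Trin
variable (K : Type*) [Field K] (n : Fin 3 → ℕ) (l : ∀ i : Fin 3, Fin (n i) → ℕ)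

/-- Exponent vector of the `i`-th monomial of the trinomial. -/
noncomputable def mvec (i : Fin 3) : TrinIdx n →₀ ℕ :=
  ∑ j : Fin (n i), Finsupp.single ⟨i, j⟩ (l i j)

variable {n}

theorem mvec_apply_self (i : Fin 3) (j : Fin (n i)) : mvec n l i ⟨i, j⟩ = l i j := by
  classical
  rw [mvec, Finsupp.finset_sum_apply]
  rw [Finset.sum_eq_single j (fun b _ hb => by
    simp [Finsupp.single_apply, Sigma.mk.inj_iff, hb]) (by simp)]
  simp

theorem mvec_apply_ne (i i' : Fin 3) (j' : Fin (n i')) (h : i' ≠ i) :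
    mvec n l i ⟨i', j'⟩ = 0 := by
  classical
  rw [mvec, Finsupp.finset_sum_apply]
  refine Finset.sum_eq_zero fun b _ => ?_
  simp [Finsupp.single_apply, Sigma.mk.inj_iff, Ne.symm h]

theorem trinomial_eq : trinomial K n l = ∑ i : Fin 3, monomial (mvec n l i) (1 : K) :=
  Finset.sum_congr rfl fun i _ => prod_X_pow_eq_monomial' Finset.univ _ _

theorem pderiv_trinomial (i : Fin 3) (j : Fin (n i)) :
    pderiv (⟨i, j⟩ : TrinIdx n) (trinomial K n l)
      = monomial (mvec n l i - Finsupp.single ⟨i, j⟩ 1) (l i j : K) := by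
  classical
  rw [trinomial_eq, deriv_map_sum]
  rw [Finset.sum_eq_single i (fun b _ hb => by
      rw [pderiv_monomial, one_mul, mvec_apply_ne l b i j (Ne.symm hb), Nat.cast_zero, monomial_zero])
    (by simp)]
  rw [pderiv_monomial, one_mul, mvec_apply_self]

/-! weights -/

variable {A : Type*} [AddCommGroup A]

theorem monWeight_eq_sum_univ (w : TrinIdx n → A) (m : TrinIdx n →₀ ℕ) :
    monWeight w m = ∑ x : TrinIdx n, m x • w x := by
  refine Finset.sum_subset (Finset.subset_univ _) fun x _ hx => ?_
  rw [Finsupp.notMem_support_iff.mp hx, zero_smul]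

theorem monWeight_add (w : TrinIdx n → A) (m1 m2 : TrinIdx n →₀ ℕ) :
    monWeight w (m1 + m2) = monWeight w m1 + monWeight w m2 := by
  simp only [monWeight_eq_sum_univ, Finsupp.coe_add, Pi.add_apply, add_smul,
    Finset.sum_add_distrib]

theorem monWeight_single (w : TrinIdx n → A) (v : TrinIdx n) :
    monWeight w (Finsupp.single v 1) = w v := by
  rw [monWeight, Finsupp.support_single_ne_zero v one_ne_zero, Finset.sum_singleton,
    Finsupp.single_eq_same, one_smul]

theorem monWeight_sub_single (w : TrinIdx n → A) (m : TrinIdx n →₀ ℕ) (v : TrinIdx n)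
    (h : m v ≠ 0) : monWeight w (m - Finsupp.single v 1) = monWeight w m - w v := by
  have key : (m - Finsupp.single v 1) + Finsupp.single v 1 = m := by
    ext x
    rw [Finsupp.add_apply, Finsupp.tsub_apply, Finsupp.single_apply]
    split_ifs with hvx
    · subst hvx; omega
    · omega
  calc monWeight w (m - Finsupp.single v 1)
      = (monWeight w (m - Finsupp.single v 1) + monWeight w (Finsupp.single v 1)) - w v := by
        rw [monWeight_single]; abel
    _ = monWeight w m - w v := by rw [← monWeight_add, key]

theorem trinQ_sub_mem (v w : TrinIdx n → ℤ)
    (h : v - w ∈ Submodule.span ℤ {trinRow n l 1, trinRow n l 2}) :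
    trinQ n l v = trinQ n l w :=
  (Submodule.Quotient.eq _).mpr h

theorem monWeight_trinDeg (m : TrinIdx n →₀ ℕ) :
    monWeight (trinDeg n l) m = trinQ n l (fun x => (m x : ℤ)) := by
  rw [monWeight_eq_sum_univ]
  have h1 : ∀ x : TrinIdx n, m x • trinDeg n l x
      = Submodule.mkQ (Submodule.span ℤ {trinRow n l 1, trinRow n l 2})
          ((m x : ℤ) • Pi.single x 1) := by
    intro x
    rw [map_smul, natCast_zsmul]
    rfl
  rw [Finset.sum_congr rfl fun x _ => h1 x, ← map_sum]
  have h2 : (∑ x : TrinIdx n, (m x : ℤ) • Pi.single x (1 : ℤ)) = (fun y => (m y : ℤ)) := by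
    funext y
    rw [Finset.sum_apply]
    rw [Finset.sum_eq_single y (fun b _ hb => by
        rw [Pi.smul_apply, Pi.single_eq_of_ne (Ne.symm hb), smul_zero])
      (fun h => absurd (Finset.mem_univ y) h)]
    rw [Pi.smul_apply, Pi.single_eq_same, smul_eq_mul, mul_one]
  rw [h2]
  rfl

theorem monWeight_mvec (i : Fin 3) :
    monWeight (trinDeg n l) (mvec n l i) = monWeight (trinDeg n l) (mvec n l 0) := by
  have key : ∀ i : Fin 3, i ≠ 0 →
      (fun x => ((mvec n l i) x : ℤ)) - (fun x => ((mvec n l 0) x : ℤ)) = trinRow n l i := by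
    intro i hi
    funext x
    obtain ⟨i', j'⟩ := x
    simp only [Pi.sub_apply, trinRow]
    by_cases h0 : i' = 0
    · subst h0
      rw [mvec_apply_ne l (i' := 0) (i := i) _ (Ne.symm hi), mvec_apply_self, if_pos rfl]
      omega
    · rw [if_neg h0, mvec_apply_ne l (i' := i') (i := 0) _ h0]
      by_cases h1 : i' = i
      · subst h1
        rw [mvec_apply_self, if_pos rfl]
        omega
      · rw [mvec_apply_ne l _ _ _ h1, if_neg h1]
        omega
  by_cases hi : i = 0
  · rw [hi]
  · rw [monWeight_trinDeg, monWeight_trinDeg]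
    refine trinQ_sub_mem l _ _ ?_
    rw [key i hi]
    refine Submodule.subset_span ?_
    have : i = 1 ∨ i = 2 := by omega
    rcases this with h | h <;> subst h <;> simp

end Trin
section Eval
variable (K : Type*) [Field K] {n : Fin 3 → ℕ} (l : ∀ i : Fin 3, Fin (n i) → ℕ)

/-- Evaluation point killing `g` but not `∂g/∂T_{i0 j0}`. -/
noncomputable def trinPt (i0 : Fin 3) (j0 : Fin (n i0)) : TrinIdx n → K :=
  fun x => if x.1 = i0 then (if x = ⟨i0, j0⟩ then 0 else 1) else 0

theorem eval_trinPt_trinomial (hn : ∀ i, 0 < n i) (hl : ∀ i j, 0 < l i j)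
    (i0 : Fin 3) (j0 : Fin (n i0)) (h1 : l i0 j0 = 1) :
    eval (trinPt K i0 j0) (trinomial K n l) = 0 := by
  classical
  rw [trinomial_eq, map_sum]
  refine Finset.sum_eq_zero fun i _ => ?_
  rw [eval_monomial, one_mul]
  rcases eq_or_ne i i0 with rfl | hii
  · refine Finset.prod_eq_zero (i := (⟨i, j0⟩ : TrinIdx n)) ?_ ?_
    · rw [Finsupp.mem_support_iff, mvec_apply_self, h1]; exact one_ne_zero
    · have hptt : trinPt K i j0 ⟨i, j0⟩ = 0 := by simp [trinPt]
      dsimp only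
      rw [hptt, mvec_apply_self, h1]
      exact zero_pow one_ne_zero
  · refine Finset.prod_eq_zero (i := (⟨i, ⟨0, hn i⟩⟩ : TrinIdx n)) ?_ ?_
    · rw [Finsupp.mem_support_iff, mvec_apply_self]
      exact Nat.pos_iff_ne_zero.mp (hl i _)
    · have hpt : trinPt K i0 j0 ⟨i, ⟨0, hn i⟩⟩ = 0 := by simp [trinPt, hii]
      dsimp only
      rw [hpt, mvec_apply_self]
      exact zero_pow (Nat.pos_iff_ne_zero.mp (hl i _))

theorem eval_trinPt_pderiv (i0 : Fin 3) (j0 : Fin (n i0)) (h1 : l i0 j0 = 1) :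
    eval (trinPt K i0 j0) (pderiv (⟨i0, j0⟩ : TrinIdx n) (trinomial K n l)) = 1 := by
  classical
  rw [pderiv_trinomial, eval_monomial, h1, Nat.cast_one, one_mul]
  refine Finset.prod_eq_one fun x hx => ?_
  rw [Finsupp.mem_support_iff] at hx
  have hxt : x ≠ ⟨i0, j0⟩ := by
    intro h
    apply hx
    rw [h, Finsupp.tsub_apply, Finsupp.single_eq_same, mvec_apply_self, h1]
    rfl
  have hx1 : x.1 = i0 := by
    by_contra hne
    apply hx
    obtain ⟨x1, x2⟩ := x
    rw [Finsupp.tsub_apply, mvec_apply_ne l i0 x1 x2 hne]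
    exact Nat.zero_sub _
  have hpt : trinPt K i0 j0 x = 1 := by simp [trinPt, hx1, hxt]
  dsimp only
  rw [hpt, one_pow]

theorem trin_pderiv_not_mem (hn : ∀ i, 0 < n i) (hl : ∀ i j, 0 < l i j)
    (i0 : Fin 3) (j0 : Fin (n i0)) (h1 : l i0 j0 = 1) :
    pderiv (⟨i0, j0⟩ : TrinIdx n) (trinomial K n l) ∉ Ideal.span {trinomial K n l} := by
  intro hmem
  obtain ⟨c, hc⟩ := Ideal.mem_span_singleton'.mp hmem
  have := congrArg (eval (trinPt K i0 j0)) hc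
  rw [map_mul, eval_trinPt_trinomial K l hn hl i0 j0 h1, mul_zero,
    eval_trinPt_pderiv K l i0 j0 h1] at this
  exact one_ne_zero this.symm

end Eval
/-- If some exponent `l_{ij}` of the trinomial `g` equals `1`, then the trinomial algebra
`R(g)` admits a nonzero locally nilpotent derivation homogeneous with respect to the finest
grading by `ℤⁿ/Im(L*)`. -/
theorem exists_homogeneous_lnd_of_exponent_one (K : Type*) [Field K] [IsAlgClosed K]
    [CharZero K] (n : Fin 3 → ℕ) (l : ∀ i : Fin 3, Fin (n i) → ℕ)
    (hn : ∀ i, 0 < n i) (hl : ∀ i j, 0 < l i j)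
    (hone : ∃ i j, l i j = 1) :
    ∃ δ : Derivation K (TrinAlg K n l) (TrinAlg K n l),
      δ ≠ 0 ∧ IsLND K l δ ∧ IsHomogDer K l (trinDeg n l) δ := by
  classical
  obtain ⟨i0, j0, h1⟩ := hone
  obtain ⟨i1, hi1⟩ : ∃ i1 : Fin 3, i1 ≠ i0 := by
    rcases eq_or_ne i0 0 with rfl | h
    · exact ⟨1, by decide⟩
    · exact ⟨0, Ne.symm h⟩
  set j1 : Fin (n i1) := ⟨0, hn i1⟩ with hj1
  let t : TrinIdx n := ⟨i0, j0⟩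
  let u : TrinIdx n := ⟨i1, j1⟩
  have htu : t ≠ u := fun h => hi1 (congrArg Sigma.fst h).symm
  -- the derivation on the polynomial ring
  let D₀ : Derivation K (MvPolynomial (TrinIdx n) K) (MvPolynomial (TrinIdx n) K) :=
    (pderiv u (trinomial K n l)) • pderiv t - (pderiv t (trinomial K n l)) • pderiv u
  have D_apply : ∀ f, D₀ f = pderiv u (trinomial K n l) * pderiv t f
      - pderiv t (trinomial K n l) * pderiv u f := by
    intro f
    rw [show D₀ = (pderiv u (trinomial K n l)) • pderiv t
        - (pderiv t (trinomial K n l)) • pderiv u from rfl]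
    rw [Derivation.sub_apply, Derivation.smul_apply, Derivation.smul_apply, smul_eq_mul,
      smul_eq_mul]
  have Dg : D₀ (trinomial K n l) = 0 := by rw [D_apply]; ring
  have hD : ∀ x ∈ Ideal.span {trinomial K n l}, D₀ x ∈ Ideal.span {trinomial K n l} := by
    intro x hx
    obtain ⟨c, hc⟩ := Ideal.mem_span_singleton'.mp hx
    rw [← hc, D₀.leibniz, Dg, smul_zero, zero_add, smul_eq_mul]
    exact Ideal.mem_span_singleton'.mpr ⟨D₀ c, mul_comm _ _⟩
  set δ : Derivation K (TrinAlg K n l) (TrinAlg K n l) :=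
    quotDer (Ideal.span {trinomial K n l}) D₀ hD with hδ
  -- explicit formulas for the two partials of g
  have ha : pderiv u (trinomial K n l)
      = monomial (mvec n l i1 - Finsupp.single u 1) ((l i1 j1 : K)) := pderiv_trinomial K l i1 j1
  have hb : pderiv t (trinomial K n l)
      = monomial (mvec n l i0 - Finsupp.single t 1) ((l i0 j0 : K)) := pderiv_trinomial K l i0 j0
  -- exponent facts
  have hmi0t : mvec n l i0 t = 1 := by
    rw [show mvec n l i0 t = l i0 j0 from mvec_apply_self l i0 j0, h1]
  have hmi0u : mvec n l i0 u = 0 := mvec_apply_ne l i0 i1 j1 hi1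
  have hmi1t : mvec n l i1 t = 0 := mvec_apply_ne l i1 i0 j0 (Ne.symm hi1)
  have hmi1u : mvec n l i1 u = l i1 j1 := mvec_apply_self l i1 j1
  have hεt_t : (mvec n l i0 - Finsupp.single t 1 : TrinIdx n →₀ ℕ) t = 0 := by
    rw [Finsupp.tsub_apply, Finsupp.single_eq_same, hmi0t]
  have hεt_u : (mvec n l i0 - Finsupp.single t 1 : TrinIdx n →₀ ℕ) u = 0 := by
    rw [Finsupp.tsub_apply, hmi0u]
    exact Nat.zero_sub _
  have hεu_t : (mvec n l i1 - Finsupp.single u 1 : TrinIdx n →₀ ℕ) t = 0 := by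
    rw [Finsupp.tsub_apply, hmi1t]
    exact Nat.zero_sub _
  -- degree facts
  have hdegub : degreeOf u (pderiv t (trinomial K n l)) = 0 :=
    Nat.le_zero.mp (by rw [hb]; exact le_trans (degreeOf_monomial_le u _ _) (le_of_eq hεt_u))
  have hdegtb : degreeOf t (pderiv t (trinomial K n l)) = 0 :=
    Nat.le_zero.mp (by rw [hb]; exact le_trans (degreeOf_monomial_le t _ _) (le_of_eq hεt_t))
  have hdegta : degreeOf t (pderiv u (trinomial K n l)) = 0 :=
    Nat.le_zero.mp (by rw [ha]; exact le_trans (degreeOf_monomial_le t _ _) (le_of_eq hεu_t))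
  have hDb : D₀ (pderiv t (trinomial K n l)) = 0 := by
    rw [D_apply, pderiv_eq_zero_of_degreeOf_eq_zero _ _ hdegtb,
      pderiv_eq_zero_of_degreeOf_eq_zero _ _ hdegub, mul_zero, mul_zero, sub_zero]
  refine ⟨δ, ?_, ?_, ?_⟩
  · -- nonzero
    intro h0
    have hz : δ ((Ideal.Quotient.mk (Ideal.span {trinomial K n l})) (X u)) = 0 := by
      rw [h0]; rfl
    have hDXu : D₀ (X u) = -(pderiv t (trinomial K n l)) := by
      rw [D_apply, pderiv_X_of_ne (Ne.symm htu), pderiv_X_self, mul_zero, mul_one, zero_sub]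
    have h2 : Ideal.Quotient.mk (Ideal.span {trinomial K n l}) (D₀ (X u)) = 0 :=
      (quotDer_mk _ D₀ hD (X u)).symm.trans hz
    rw [hDXu, map_neg, neg_eq_zero, Ideal.Quotient.eq_zero_iff_mem] at h2
    exact trin_pderiv_not_mem K l hn hl i0 j0 h1 h2
  · -- locally nilpotent
    have nilNoT : ∀ (N : ℕ) (p : MvPolynomial (TrinIdx n) K), degreeOf u p ≤ N →
        degreeOf t p = 0 → ∃ m, (⇑D₀)^[m] p = 0 := by
      intro N
      induction N with
      | zero =>
        intro p hu0 ht0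
        refine ⟨1, ?_⟩
        rw [Function.iterate_one, D_apply, pderiv_eq_zero_of_degreeOf_eq_zero _ _ ht0,
          pderiv_eq_zero_of_degreeOf_eq_zero _ _ (Nat.le_zero.mp hu0), mul_zero, mul_zero,
          sub_zero]
      | succ N ih =>
        intro p hu0 ht0
        have hDp : D₀ p = -(pderiv t (trinomial K n l) * pderiv u p) := by
          rw [D_apply, pderiv_eq_zero_of_degreeOf_eq_zero _ _ ht0, mul_zero, zero_sub]
        have h1' : degreeOf u (D₀ p) ≤ N := by
          rw [hDp, degreeOf_neg']
          refine le_trans (degreeOf_mul_le _ _ _) ?_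
          rw [hdegub, zero_add]
          exact degreeOf_pderiv_self_le u p hu0
        have h2' : degreeOf t (D₀ p) = 0 := by
          refine Nat.le_zero.mp ?_
          rw [hDp, degreeOf_neg']
          refine le_trans (degreeOf_mul_le _ _ _) ?_
          rw [hdegtb, zero_add]
          exact le_trans (degreeOf_pderiv_other_le t u p) (le_of_eq ht0)
        obtain ⟨m, hm⟩ := ih (D₀ p) h1' h2'
        exact ⟨m + 1, by rw [Function.iterate_succ_apply]; exact hm⟩
    have nilX : ∀ v : TrinIdx n, ∃ m, (⇑D₀)^[m] (X v : MvPolynomial (TrinIdx n) K) = 0 := by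
      intro v
      rcases eq_or_ne v t with rfl | hvt
      · have hDXt : D₀ (X t) = pderiv u (trinomial K n l) := by
          rw [D_apply, pderiv_X_self, pderiv_X_of_ne htu, mul_one, mul_zero, sub_zero]
        obtain ⟨m, hm⟩ := nilNoT (degreeOf u (pderiv u (trinomial K n l))) _ le_rfl hdegta
        exact ⟨m + 1, by rw [Function.iterate_succ_apply, hDXt]; exact hm⟩
      · rcases eq_or_ne v u with rfl | hvu
        · have hDXu : D₀ (X u) = -(pderiv t (trinomial K n l)) := by
            rw [D_apply, pderiv_X_of_ne (Ne.symm htu), pderiv_X_self, mul_zero, mul_one,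
              zero_sub]
          refine ⟨2, ?_⟩
          rw [Function.iterate_succ_apply, hDXu, Function.iterate_one, D₀.map_neg, hDb,
            neg_zero]
        · refine ⟨1, ?_⟩
          rw [Function.iterate_one, D_apply, pderiv_X_of_ne hvt, pderiv_X_of_ne hvu, mul_zero,
            mul_zero, sub_zero]
    have nilAll : ∀ p : MvPolynomial (TrinIdx n) K, ∃ m, (⇑D₀)^[m] p = 0 := by
      intro p
      induction p using MvPolynomial.induction_on with
      | C c => exact ⟨1, by rw [Function.iterate_one]; exact derivation_C _ _⟩
      | add p q hp hq =>
        obtain ⟨mp, hmp⟩ := hp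
        obtain ⟨mq, hmq⟩ := hq
        refine ⟨max mp mq, ?_⟩
        rw [iter_deriv_add, iter_deriv_le D₀ (le_max_left _ _) hmp,
          iter_deriv_le D₀ (le_max_right _ _) hmq, add_zero]
      | mul_X p v hp =>
        obtain ⟨mp, hmp⟩ := hp
        obtain ⟨mv, hmv⟩ := nilX v
        exact ⟨mp + mv, iter_deriv_mul D₀ (mp + mv) mp mv p (X v) hmp hmv (by omega)⟩
    intro f
    obtain ⟨p, rfl⟩ := Ideal.Quotient.mk_surjective f
    obtain ⟨m, hm⟩ := nilAll p
    refine ⟨m, ?_⟩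
    have comm : ∀ (k : ℕ) (q : MvPolynomial (TrinIdx n) K),
        (δ.toLinearMap ^ k) (Ideal.Quotient.mk (Ideal.span {trinomial K n l}) q)
          = Ideal.Quotient.mk (Ideal.span {trinomial K n l}) ((⇑D₀)^[k] q) := by
      intro k
      induction k with
      | zero => intro q; rfl
      | succ k ihk =>
        intro q
        have hstep : δ.toLinearMap (Ideal.Quotient.mk (Ideal.span {trinomial K n l}) q)
            = Ideal.Quotient.mk (Ideal.span {trinomial K n l}) (D₀ q) := quotDer_mk _ D₀ hD q
        rw [pow_succ, Module.End.mul_apply, hstep, ihk, ← Function.iterate_succ_apply]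
    rw [comm m p, hm, map_zero]
  · -- homogeneous
    refine ⟨monWeight (trinDeg n l) (mvec n l 0) - trinDeg n l t - trinDeg n l u, ?_⟩
    rintro e f ⟨p, rfl, hhom⟩
    refine ⟨D₀ p, (quotDer_mk _ D₀ hD p).symm, ?_⟩
    intro m' hm'
    have hrep : D₀ p = ∑ m ∈ p.support, D₀ (monomial m (coeff m p)) := by
      conv_lhs => rw [p.as_sum]
      exact deriv_map_sum D₀ _ _
    rw [hrep] at hm'
    obtain ⟨m, hm, hmem⟩ := Finset.mem_biUnion.mp (support_sum hm')
    have hwm : monWeight (trinDeg n l) m = e := hhom m hm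
    rw [D_apply] at hmem
    have hmem2 : m' ∈ (pderiv u (trinomial K n l) * pderiv t (monomial m (coeff m p))).support
        ∪ (pderiv t (trinomial K n l) * pderiv u (monomial m (coeff m p))).support :=
      MvPolynomial.support_sub (σ := TrinIdx n) _ _ hmem
    rw [Finset.mem_union] at hmem2
    have hmu1 : mvec n l i1 u ≠ 0 := by
      rw [hmi1u]; exact Nat.pos_iff_ne_zero.mp (hl i1 j1)
    have hmt1 : mvec n l i0 t ≠ 0 := by rw [hmi0t]; exact one_ne_zero
    rcases hmem2 with hc | hc
    · obtain ⟨m1, hm1, m2, hm2, hsum⟩ := Finset.mem_add.mp (support_mul _ _ hc)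
      rw [ha] at hm1
      obtain ⟨hc1, rfl⟩ := mem_support_monomial' hm1
      rw [pderiv_monomial] at hm2
      obtain ⟨hc2, rfl⟩ := mem_support_monomial' hm2
      have hmt : m t ≠ 0 := fun h => hc2 (by rw [h, Nat.cast_zero, mul_zero])
      rw [← hsum, monWeight_add, monWeight_sub_single _ _ _ hmu1,
        monWeight_sub_single _ _ _ hmt, monWeight_mvec, hwm]
      abel
    · obtain ⟨m1, hm1, m2, hm2, hsum⟩ := Finset.mem_add.mp (support_mul _ _ hc)
      rw [hb] at hm1
      obtain ⟨hc1, rfl⟩ := mem_support_monomial' hm1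
      rw [pderiv_monomial] at hm2
      obtain ⟨hc2, rfl⟩ := mem_support_monomial' hm2
      have hmu : m u ≠ 0 := fun h => hc2 (by rw [h, Nat.cast_zero, mul_zero])
      rw [← hsum, monWeight_add, monWeight_sub_single _ _ _ hmt1,
        monWeight_sub_single _ _ _ hmu, monWeight_mvec, hwm]
      abel
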